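/- Under the standing construction, define w : [0,1) → X by w(t) := Σ_{n=1}^∞ χ_{[t_n,1)}(t) · (1/Γ(1−α)) (∫_0^t (t−s)^{−α} z_{n+1}′(s) ds) v_{n+1}, which is a finite sum for each t ∈ [0,1). Then w is continuous on [0,1), and for every t ∈ (0,1) the function r ↦ (1/Γ(1−α)) ∫_0^r (r−s)^{−α} (u(s) − v₁) ds is differentiable at t with derivative w(t); that is, the Caputo fractional derivative of order α of u(t) := Σ_{n=1}^∞ z_n(t) v_n exists on (0,1) and equals w. -/

import Mathlib

open Set Filter MeasureTheory intervalIntegral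

section aux
variable {α : ℝ}

lemma ker_int (hα1 : α < 1) (a b : ℝ) :
    IntervalIntegrable (fun σ : ℝ => σ ^ (-α)) volume a b :=
  intervalIntegrable_rpow' (by linarith)

lemma aux_int (hα1 : α < 1) {f : ℝ → ℝ} (hf : Continuous f) (r a b : ℝ) :
    IntervalIntegrable (fun σ : ℝ => σ ^ (-α) * f (r - σ)) volume a b :=
  (ker_int hα1 a b).mul_continuousOn
    ((hf.comp (continuous_const.sub continuous_id)).continuousOn)

lemma frac_eq (hα1 : α < 1) {f : ℝ → ℝ} (hf : Continuous f)
    (h0 : ∀ x ≤ (0:ℝ), f x = 0) {r T : ℝ} (hr : 0 ≤ r) (hrT : r ≤ T) :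
    ∫ σ in (0:ℝ)..r, (r - σ) ^ (-α) * f σ = ∫ σ in (0:ℝ)..T, σ ^ (-α) * f (r - σ) := by
  have h2 : ∫ σ in r..T, σ ^ (-α) * f (r - σ) = 0 := by
    rw [intervalIntegral.integral_congr (g := fun _ => (0:ℝ)) ?_, intervalIntegral.integral_zero]
    intro σ hσ
    rw [uIcc_of_le hrT] at hσ
    show σ ^ (-α) * f (r - σ) = 0
    rw [h0 (r - σ) (by linarith [hσ.1]), mul_zero]
  have h3 := intervalIntegral.integral_add_adjacent_intervals
    (aux_int hα1 hf r 0 r) (aux_int hα1 hf r r T)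
  have h1 : ∫ σ in (0:ℝ)..r, (r - σ) ^ (-α) * f σ
      = ∫ σ in (0:ℝ)..r, σ ^ (-α) * f (r - σ) := by
    have h := intervalIntegral.integral_comp_sub_left (a := 0) (b := r)
      (fun σ => σ ^ (-α) * f (r - σ)) r
    simp only [sub_zero, sub_self] at h
    rw [← h]
    apply intervalIntegral.integral_congr
    intro σ _
    simp [sub_sub_cancel]
  rw [h1, ← h3, h2, add_zero]

end aux

section aux2
variable {α : ℝ}

lemma frac_cont (hα1 : α < 1) {f : ℝ → ℝ} (hf : Continuous f)
    {C : ℝ} (hC : ∀ x, |f x| ≤ C) {T : ℝ} (hT : 0 ≤ T) :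
    Continuous fun x : ℝ => ∫ σ in (0:ℝ)..T, σ ^ (-α) * f (x - σ) := by
  simp only [intervalIntegral.integral_of_le hT]
  apply MeasureTheory.continuous_of_dominated (bound := fun σ : ℝ => |σ ^ (-α)| * C)
  · intro x
    have h := (aux_int hα1 hf x 0 T)
    rw [intervalIntegrable_iff] at h
    rw [uIoc_of_le hT] at h
    exact h.aestronglyMeasurable
  · intro x
    refine Filter.Eventually.of_forall fun σ => ?_
    rw [Real.norm_eq_abs, abs_mul]
    exact mul_le_mul_of_nonneg_left (hC _) (abs_nonneg _)
  · have h := ((ker_int hα1 0 T).norm.mul_const C)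
    rw [intervalIntegrable_iff, uIoc_of_le hT] at h
    exact h
  · refine Filter.Eventually.of_forall fun σ => ?_
    exact continuous_const.mul (hf.comp (continuous_id.sub continuous_const))

end aux2

section aux3
variable {α : ℝ}

lemma deriv_zero_below {F : ℝ → ℝ} {c : ℝ} (h : ∀ x ≤ c, F x = 0) {x : ℝ} (hx : x < c) :
    deriv F x = 0 := by
  have he : F =ᶠ[nhds x] (fun _ => (0:ℝ)) :=
    Filter.eventuallyEq_of_mem (Iio_mem_nhds hx) (fun y hy => h y (le_of_lt hy))
  rw [he.deriv_eq, deriv_const]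

lemma frac_deriv (hα0 : 0 < α) (hα1 : α < 1) {F : ℝ → ℝ} (hF : ContDiff ℝ 1 F)
    {c : ℝ} (hc : 0 < c) (h0 : ∀ x ≤ c, F x = 0) (hsupp : HasCompactSupport F)
    {s : ℝ} (hs : 0 < s) :
    HasDerivAt (fun r : ℝ => ∫ σ in (0:ℝ)..r, (r - σ) ^ (-α) * F σ)
      (∫ σ in (0:ℝ)..s, (s - σ) ^ (-α) * deriv F σ) s := by
  have hF0 : ∀ x ≤ (0:ℝ), F x = 0 := fun x hx => h0 x (by linarith)
  have hFc : Continuous F := hF.continuous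
  have hF'c : Continuous (deriv F) := hF.continuous_deriv le_rfl
  have hF'0 : ∀ x ≤ (0:ℝ), deriv F x = 0 := fun x hx => deriv_zero_below h0 (by linarith)
  obtain ⟨C, hC⟩ := (hsupp.deriv).exists_bound_of_continuous hF'c
  set C0 : ℝ := max C 0 with hC0def
  have hC0 : ∀ x, |deriv F x| ≤ C0 := fun x => le_trans (hC x) (le_max_left _ _)
  have hC0nn : (0:ℝ) ≤ C0 := le_max_right _ _
  have hlip : LipschitzWith C0.toNNReal F := by
    apply lipschitzWith_of_nnnorm_deriv_le (hF.differentiable (by norm_num))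
    intro x
    rw [← NNReal.coe_le_coe, coe_nnnorm, Real.coe_toNNReal _ hC0nn]
    exact hC0 x
  set T : ℝ := s + 1 with hTdef
  have hsT : s ≤ T := by simp [hTdef]
  have hT0 : (0:ℝ) ≤ T := by linarith
  set ε : ℝ := min s 1 / 2 with hεdef
  have hε : 0 < ε := by
    have := lt_min hs one_pos
    positivity
  have hεs : ε ≤ s / 2 := by
    have := min_le_left s 1
    simp only [hεdef]; linarith
  have hε1 : ε ≤ 1 / 2 := by
    have := min_le_right s 1
    simp only [hεdef]; linarith
  have hball : ∀ r ∈ Metric.ball s ε, 0 < r ∧ r ≤ T := by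
    intro r hr
    rw [Metric.mem_ball, Real.dist_eq, abs_lt] at hr
    constructor <;> [linarith; linarith]
  have key := intervalIntegral.hasDerivAt_integral_of_dominated_loc_of_lip
      (F := fun x σ => σ ^ (-α) * F (x - σ)) (F' := fun σ => σ ^ (-α) * deriv F (s - σ))
      (x₀ := s) (a := 0) (b := T) (bound := fun σ => σ ^ (-α) * C0) (μ := volume)
      (s := Metric.ball s ε) (Metric.ball_mem_nhds s hε) ?_ ?_ ?_ ?_ ?_ ?_
  · have hD := key.2
    have hval : (∫ σ in (0:ℝ)..T, σ ^ (-α) * deriv F (s - σ))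
        = ∫ σ in (0:ℝ)..s, (s - σ) ^ (-α) * deriv F σ :=
      (frac_eq hα1 hF'c hF'0 hs.le hsT).symm
    rw [hval] at hD
    apply hD.congr_of_eventuallyEq
    filter_upwards [Metric.ball_mem_nhds s hε] with r hr
    exact frac_eq hα1 hFc hF0 (hball r hr).1.le (hball r hr).2
  · exact Filter.Eventually.of_forall fun x => by
      have h := aux_int hα1 hFc x 0 T
      rw [intervalIntegrable_iff] at h
      exact h.aestronglyMeasurable
  · exact aux_int hα1 hFc s 0 T
  · have h := aux_int hα1 hF'c s 0 T
    rw [intervalIntegrable_iff] at h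
    exact h.aestronglyMeasurable
  · refine Filter.Eventually.of_forall fun σ hσ => ?_
    rw [Set.uIoc_of_le hT0] at hσ
    have hσ0 : 0 < σ := hσ.1
    have hker : (0:ℝ) ≤ σ ^ (-α) := Real.rpow_nonneg hσ0.le _
    rw [lipschitzOnWith_iff_dist_le_mul]
    intro x _ y _
    rw [Real.dist_eq, Real.dist_eq, Real.coe_nnabs, ← mul_sub, abs_mul]
    have hd : |F (x - σ) - F (y - σ)| ≤ C0 * |x - y| := by
      have := hlip.dist_le_mul (x - σ) (y - σ)
      rw [Real.dist_eq, Real.dist_eq, Real.coe_toNNReal _ hC0nn] at this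
      have heq : x - σ - (y - σ) = x - y := by ring
      rwa [heq] at this
    calc |σ ^ (-α)| * |F (x - σ) - F (y - σ)| ≤ |σ ^ (-α)| * (C0 * |x - y|) :=
          mul_le_mul_of_nonneg_left hd (abs_nonneg _)
      _ = |σ ^ (-α) * C0| * |x - y| := by
          rw [abs_mul, abs_of_nonneg hC0nn]; ring
  · exact (ker_int hα1 0 T).mul_const C0
  · refine Filter.Eventually.of_forall fun σ _ => ?_
    have h1 : HasDerivAt (fun x : ℝ => F (x - σ)) (deriv F (s - σ)) s := by
      have := ((hF.differentiable (by norm_num)) (s - σ)).hasDerivAt.comp s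
        ((hasDerivAt_id s).sub_const σ)
      rw [mul_one] at this
      exact this
    simpa using h1.const_mul ((σ:ℝ) ^ (-α))

end aux3

/-- Under the standing construction, the function
`w(t) = Σ_{n≥1} χ_{[t_n,1)}(t) (1/Γ(1-α)) (∫_0^t (t-s)^{-α} z_{n+1}′(s) ds) v_{n+1}`
is a finite sum for each `t ∈ [0,1)`, is continuous on `[0,1)`, and is the Caputo
fractional derivative of order `α` of `u(t) = Σ_{n≥1} z_n(t) v_n` on `(0,1)`. -/
theorem standing_construction_caputo_derivative
    (α : ℝ) (hα : α ∈ Set.Ioo (0 : ℝ) 1)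
    (X : Type*) [NormedAddCommGroup X] [NormedSpace ℝ X] [CompleteSpace X]
    (t : ℕ → ℝ) (z : ℕ → ℝ → ℝ) (v : ℕ → X)
    (ht_mem : ∀ n, 1 ≤ n → t n ∈ Set.Ioo (0 : ℝ) 1)
    (ht_mono : ∀ n, 1 ≤ n → t n < t (n + 1))
    (ht_lim : Filter.Tendsto t Filter.atTop (nhds 1))
    (ht_step : ∀ n, 2 ≤ n → t (n + 1) - t n < t n - t (n - 1))
    (hz1 : ∀ s : ℝ, z 1 s = 1)
    (hz_smooth : ∀ n, 2 ≤ n → ContDiff ℝ 1 (z n))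
    (hz_one : ∀ n, 2 ≤ n → ∀ s ∈ Set.Icc (t n) (t (n + 1)), z n s = 1)
    (hz_mid : ∀ n, 2 ≤ n → ∀ s ∈ Set.Ioo ((t (n - 1) + t n) / 2) (t n) ∪
        Set.Ioo (t (n + 1)) ((t (n + 1) + t (n + 2)) / 2),
      0 < z n s ∧ z n s < 1)
    (hz_zero : ∀ n, 2 ≤ n → ∀ s : ℝ,
      s ∉ Set.Ioo ((t (n - 1) + t n) / 2) ((t (n + 1) + t (n + 2)) / 2) → z n s = 0)
    (hz_deriv_nonneg : ∀ n, 2 ≤ n →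
      ∀ s ∈ Set.Icc ((t (n - 1) + t n) / 2) (t n), 0 ≤ deriv (z n) s)
    (hz_deriv_nonpos : ∀ n, 2 ≤ n →
      ∀ s ∈ Set.Icc (t (n + 1)) ((t (n + 1) + t (n + 2)) / 2), deriv (z n) s ≤ 0)
    (hv : ∀ n, 1 ≤ n → ‖v n‖ = 1) :
    ∀ u w : ℝ → X,
      (∀ s : ℝ, u s = ∑' n : ℕ, z (n + 1) s • v (n + 1)) →
      (∀ s : ℝ, w s = ∑' n : ℕ,
        Set.indicator (Set.Ico (t (n + 1)) 1)
          (fun r : ℝ => (1 / Real.Gamma (1 - α)) *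
            ∫ σ in (0 : ℝ)..r, ((r - σ) ^ (-α)) * deriv (z (n + 2)) σ) s • v (n + 2)) →
      -- for each t ∈ [0,1) only finitely many terms are nonzero
      (∀ s ∈ Set.Ico (0 : ℝ) 1,
        {n : ℕ | Set.indicator (Set.Ico (t (n + 1)) 1)
          (fun r : ℝ => (1 / Real.Gamma (1 - α)) *
            ∫ σ in (0 : ℝ)..r, ((r - σ) ^ (-α)) * deriv (z (n + 2)) σ) s • v (n + 2) ≠ 0}.Finite) ∧
      -- w is continuous on [0,1)
      ContinuousOn w (Set.Ico 0 1) ∧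
      -- the Caputo derivative of u exists on (0,1) and equals w
      (∀ s ∈ Set.Ioo (0 : ℝ) 1,
        HasDerivAt (fun r : ℝ => (1 / Real.Gamma (1 - α)) •
          ∫ σ in (0 : ℝ)..r, ((r - σ) ^ (-α)) • (u σ - v 1)) (w s) s) := by
  obtain ⟨hα0, hα1⟩ := hα
  intro u w hu hw
  have ht_pos : ∀ n, 1 ≤ n → 0 < t n := fun n hn => (ht_mem n hn).1
  have ht_lt1 : ∀ n, 1 ≤ n → t n < 1 := fun n hn => (ht_mem n hn).2
  -- z m vanishes at or below t (m-1)
  have hz_zero_le : ∀ m : ℕ, 2 ≤ m → ∀ x : ℝ, x ≤ t (m - 1) → z m x = 0 := by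
    intro m hm x hx
    apply hz_zero m hm
    intro hmem
    have h1 : t (m - 1) < t m := by
      have h := ht_mono (m - 1) (by omega)
      have e : m - 1 + 1 = m := by omega
      rwa [e] at h
    exact absurd hmem.1 (by push_neg; linarith)
  -- z m vanishes at or below the left midpoint
  have hz_zero_mid : ∀ m : ℕ, 2 ≤ m → ∀ x : ℝ, x ≤ (t (m - 1) + t m) / 2 → z m x = 0 := by
    intro m hm x hx
    apply hz_zero m hm
    intro hmem
    exact absurd hmem.1 (not_lt.mpr hx)
  -- deriv of z m vanishes strictly below the left midpoint, hence at or below t (m-1)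
  have hdz_zero_le : ∀ m : ℕ, 2 ≤ m → ∀ x : ℝ, x ≤ t (m - 1) → deriv (z m) x = 0 := by
    intro m hm x hx
    have h1 : t (m - 1) < t m := by
      have h := ht_mono (m - 1) (by omega)
      have e : m - 1 + 1 = m := by omega
      rwa [e] at h
    exact deriv_zero_below (hz_zero_mid m hm) (by linarith)
  have hsupp : ∀ m : ℕ, 2 ≤ m → HasCompactSupport (z m) := by
    intro m hm
    apply HasCompactSupport.intro
      (isCompact_Icc (a := (t (m - 1) + t m) / 2) (b := (t (m + 1) + t (m + 2)) / 2))
    intro x hx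
    exact hz_zero m hm x (fun hmem => hx ⟨hmem.1.le, hmem.2.le⟩)
  -- vanishing of the fractional integral of deriv (z (n+2)) below t (n+1)
  have hg_zero : ∀ n : ℕ, ∀ s : ℝ, 0 ≤ s → s < t (n + 1) →
      (∫ σ in (0:ℝ)..s, (s - σ) ^ (-α) * deriv (z (n + 2)) σ) = 0 := by
    intro n s hs0 hst
    rw [intervalIntegral.integral_congr (g := fun _ => (0:ℝ)) ?_, intervalIntegral.integral_zero]
    intro σ hσ
    rw [uIcc_of_le hs0] at hσ
    show (s - σ) ^ (-α) * deriv (z (n + 2)) σ = 0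
    have e : n + 2 - 1 = n + 1 := rfl
    rw [hdz_zero_le (n + 2) (by omega) σ (by rw [e]; linarith [hσ.2]), mul_zero]
  have hfin : ∀ s : ℝ, s < 1 → {n : ℕ | t (n + 1) ≤ s}.Finite := by
    intro s hs
    have h1 : ∀ᶠ n in Filter.atTop, s < t (n + 1) :=
      (ht_lim.comp (Filter.tendsto_add_atTop_nat 1)).eventually (eventually_gt_nhds hs)
    rw [← Nat.cofinite_eq_atTop] at h1
    exact (Filter.eventually_cofinite.mp h1).subset (fun n hn => not_lt.mpr hn)
  have hM : ∀ b : ℝ, b < 1 → ∃ M : ℕ, 1 ≤ M ∧ ∀ n, M ≤ n → b < t n := by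
    intro b hb
    obtain ⟨M₀, hM₀⟩ := Filter.eventually_atTop.mp (ht_lim.eventually (eventually_gt_nhds hb))
    exact ⟨max M₀ 1, le_max_right _ _, fun n hn => hM₀ n (le_trans (le_max_left _ _) hn)⟩
  -- finite-sum representation of w
  have hwrep : ∀ b : ℝ, b < 1 → ∀ M : ℕ, 1 ≤ M → (∀ n, M ≤ n → b < t n) →
      ∀ s : ℝ, 0 ≤ s → s < b →
      w s = ∑ n ∈ Finset.range (M - 1),
        ((1 / Real.Gamma (1 - α)) *
          ∫ σ in (0:ℝ)..s, (s - σ) ^ (-α) * deriv (z (n + 2)) σ) • v (n + 2) := by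
    intro b hb M hM1 hMt s hs0 hsb
    rw [hw s, tsum_eq_sum (s := Finset.range (M - 1)) ?_]
    · apply Finset.sum_congr rfl
      intro n _
      congr 1
      by_cases hmem : s ∈ Set.Ico (t (n + 1)) 1
      · rw [Set.indicator_of_mem hmem]
      · rw [Set.indicator_of_notMem hmem]
        have hst : s < t (n + 1) := by
          by_contra hge
          exact hmem ⟨not_lt.mp hge, lt_trans hsb hb⟩
        rw [hg_zero n s hs0 hst, mul_zero]
    · intro n hn
      rw [Finset.mem_range, not_lt] at hn
      have h1 : b < t (n + 1) := hMt (n + 1) (by omega)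
      rw [Set.indicator_of_notMem (fun hmem => absurd hmem.1 (not_le.mpr (hsb.trans h1))),
        zero_smul]
  refine ⟨?_, ?_, ?_⟩
  · -- Part 1: finiteness
    intro s hs
    apply (hfin s hs.2).subset
    intro n hn
    simp only [Set.mem_setOf_eq] at hn ⊢
    by_contra hns
    apply hn
    rw [Set.indicator_of_notMem (fun hmem => hns hmem.1), zero_smul]
  · -- Part 2: continuity
    intro s₀ hs₀
    obtain ⟨hs₀0, hs₀1⟩ := hs₀
    set b : ℝ := (s₀ + 1) / 2 with hbdef
    have hs₀b : s₀ < b := by rw [hbdef]; linarith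
    have hb1 : b < 1 := by rw [hbdef]; linarith
    obtain ⟨M, hM1, hMt⟩ := hM b hb1
    have hWc : Continuous fun s : ℝ => ∑ n ∈ Finset.range (M - 1),
        ((1 / Real.Gamma (1 - α)) *
          ∫ σ in (0:ℝ)..(2:ℝ), σ ^ (-α) * deriv (z (n + 2)) (s - σ)) • v (n + 2) := by
      apply continuous_finset_sum
      intro n _
      have hzc : Continuous (deriv (z (n + 2))) :=
        (hz_smooth (n + 2) (by omega)).continuous_deriv le_rfl
      obtain ⟨C, hC⟩ := ((hsupp (n + 2) (by omega)).deriv).exists_bound_of_continuous hzc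
      have hC' : ∀ x, |deriv (z (n + 2)) x| ≤ C := fun x => by
        simpa [Real.norm_eq_abs] using hC x
      exact (continuous_const.mul (frac_cont hα1 hzc hC' (by norm_num : (0:ℝ) ≤ 2))).smul
        continuous_const
    have hemp : ∀ x : ℝ, 0 ≤ x → x < b → w x = ∑ n ∈ Finset.range (M - 1),
        ((1 / Real.Gamma (1 - α)) *
          ∫ σ in (0:ℝ)..(2:ℝ), σ ^ (-α) * deriv (z (n + 2)) (x - σ)) • v (n + 2) := by
      intro x hx0 hxb
      rw [hwrep b hb1 M hM1 hMt x hx0 hxb]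
      apply Finset.sum_congr rfl
      intro n _
      have hzc : Continuous (deriv (z (n + 2))) :=
        (hz_smooth (n + 2) (by omega)).continuous_deriv le_rfl
      have hdz0 : ∀ y : ℝ, y ≤ (0:ℝ) → deriv (z (n + 2)) y = 0 := by
        intro y hy
        have e : n + 2 - 1 = n + 1 := rfl
        apply hdz_zero_le (n + 2) (by omega)
        rw [e]
        have := ht_pos (n + 1) (by omega)
        linarith
      rw [frac_eq hα1 hzc hdz0 hx0 (by linarith : x ≤ (2:ℝ))]
    apply ContinuousWithinAt.congr_of_eventuallyEq hWc.continuousAt.continuousWithinAt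
    · filter_upwards [self_mem_nhdsWithin, mem_nhdsWithin_of_mem_nhds (Iio_mem_nhds hs₀b)]
        with x hx1 hx2
      exact hemp x hx1.1 hx2
    · exact hemp s₀ hs₀0 hs₀b
  · -- Part 3: Caputo derivative
    intro s hs
    obtain ⟨hs0, hs1⟩ := hs
    set b : ℝ := (s + 1) / 2 with hbdef
    have hsb : s < b := by rw [hbdef]; linarith
    have hb1 : b < 1 := by rw [hbdef]; linarith
    obtain ⟨M, hM1, hMt⟩ := hM b hb1
    have hudec : ∀ σ : ℝ, σ ≤ b →
        u σ - v 1 = ∑ n ∈ Finset.range (M - 1), z (n + 2) σ • v (n + 2) := by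
      intro σ hσb
      rw [hu σ, tsum_eq_sum (s := Finset.range M) ?_]
      · have hMsplit : Finset.range M = Finset.range ((M - 1) + 1) := by congr 1; omega
        rw [hMsplit, Finset.sum_range_succ', hz1 σ, one_smul]
        exact add_sub_cancel_right _ _
      · intro n hn
        rw [Finset.mem_range, not_lt] at hn
        have h1 : b < t n := hMt n hn
        have e : n + 1 - 1 = n := rfl
        rw [hz_zero_le (n + 1) (by omega) σ (by rw [e]; linarith), zero_smul]
    have hΦΨ : ∀ᶠ r in nhds s,
        ((1 / Real.Gamma (1 - α)) • ∫ σ in (0:ℝ)..r, ((r - σ) ^ (-α)) • (u σ - v 1))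
        = ∑ n ∈ Finset.range (M - 1),
          ((1 / Real.Gamma (1 - α)) *
            ∫ σ in (0:ℝ)..r, (r - σ) ^ (-α) * z (n + 2) σ) • v (n + 2) := by
      filter_upwards [Ioo_mem_nhds hs0 hsb] with r hr
      obtain ⟨hr0, hrb⟩ := hr
      have hk : IntervalIntegrable (fun σ : ℝ => (r - σ) ^ (-α)) volume 0 r := by
        have h := (ker_int hα1 r 0).comp_sub_left r
        simpa using h
      have hint : ∀ n ∈ Finset.range (M - 1),
          IntervalIntegrable (fun σ => ((r - σ) ^ (-α) * z (n + 2) σ) • v (n + 2)) volume 0 r := by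
        intro n _
        have hh := hk.mul_continuousOn
          ((hz_smooth (n + 2) (by omega)).continuous.continuousOn)
        exact ⟨hh.1.smul_const _, hh.2.smul_const _⟩
      have h1 : (∫ σ in (0:ℝ)..r, ((r - σ) ^ (-α)) • (u σ - v 1))
          = ∫ σ in (0:ℝ)..r, ∑ n ∈ Finset.range (M - 1),
              ((r - σ) ^ (-α) * z (n + 2) σ) • v (n + 2) := by
        apply intervalIntegral.integral_congr
        intro σ hσ
        rw [uIcc_of_le hr0.le] at hσ
        show ((r - σ) ^ (-α)) • (u σ - v 1) = _
        rw [hudec σ (by linarith [hσ.2]), Finset.smul_sum]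
        exact Finset.sum_congr rfl (fun n _ => smul_smul _ _ _)
      rw [h1, intervalIntegral.integral_finset_sum hint, Finset.smul_sum]
      exact Finset.sum_congr rfl
        (fun n _ => by rw [intervalIntegral.integral_smul_const, smul_smul])
    have hΨd : HasDerivAt (fun r : ℝ => ∑ n ∈ Finset.range (M - 1),
        ((1 / Real.Gamma (1 - α)) *
          ∫ σ in (0:ℝ)..r, (r - σ) ^ (-α) * z (n + 2) σ) • v (n + 2)) (w s) s := by
      rw [hwrep b hb1 M hM1 hMt s hs0.le hsb]
      apply HasDerivAt.fun_sum
      intro n _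
      have e : n + 2 - 1 = n + 1 := rfl
      have hc : (0:ℝ) < (t (n + 1) + t (n + 2)) / 2 := by
        have h1 := ht_pos (n + 1) (by omega)
        have h2 := ht_pos (n + 2) (by omega)
        linarith
      have h0 : ∀ x ≤ (t (n + 1) + t (n + 2)) / 2, z (n + 2) x = 0 := by
        intro x hx
        apply hz_zero_mid (n + 2) (by omega)
        rw [e]
        exact hx
      have hd := frac_deriv hα0 hα1 (hz_smooth (n + 2) (by omega)) hc h0
        (hsupp (n + 2) (by omega)) hs0
      exact (hd.const_mul (1 / Real.Gamma (1 - α))).smul_const _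
    exact hΨd.congr_of_eventuallyEq hΦΨ
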